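/- Let (X_t)_{t≥1} be a strictly stationary, temperately dependent sequence of real random variables that satisfies the Glivenko–Cantelli property and has finite p-th moments E(|X_1|^p) < ∞ for some p > 2. Assume the common marginal cdf F and its quantile function F^{-1} are both continuous, and let a_X = sup{x : F(x)=0}, b_X = inf{x : F(x)=1}. Let h_0 be absolutely continuous on [a_X, b_X] with Radon–Nikodym derivative h_0* that is continuous on a finite interval [a, b] ⊆ [a_X, b_X] and vanishes outside [a, b]. Then Σ_{t=2}^n |h_0(X_{t:n}) − h_0(X_{t-1:n})| converges in probability, as n → ∞, to ∫_a^b |h_0*(x)| dx, where X_{1:n} < ⋯ < X_{n:n} denote the order statistics of X_1, …, X_n. -/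

import Mathlib

open MeasureTheory ProbabilityTheory Filter
open scoped Classical

/-- The `t`-th order statistic (1-based) of `X 1, …, X n`. -/
noncomputable def orderStat {Ω : Type*} (X : ℕ → Ω → ℝ) (n t : ℕ) (ω : Ω) : ℝ :=
  (List.insertionSort (· ≤ ·) ((List.range n).map fun s => X (s + 1) ω)).getD (t - 1) 0

/-- The maximum of `X 1, …, X n`. -/
noncomputable def rmax {Ω : Type*} (X : ℕ → Ω → ℝ) (n : ℕ) (ω : Ω) : ℝ :=
  (Finset.Icc 1 (max n 1)).sup' (Finset.nonempty_Icc.mpr (le_max_right n 1)) fun t => X t ω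

/-- The minimum of `X 1, …, X n`. -/
noncomputable def rmin {Ω : Type*} (X : ℕ → Ω → ℝ) (n : ℕ) (ω : Ω) : ℝ :=
  (Finset.Icc 1 (max n 1)).inf' (Finset.nonempty_Icc.mpr (le_max_right n 1)) fun t => X t ω

/-- The cumulative distribution function of a random variable `X` under `P`. -/
noncomputable def cdfOf {Ω : Type*} [MeasurableSpace Ω] (P : Measure Ω) (X : Ω → ℝ) : ℝ → ℝ :=
  fun x => (P {ω | X ω ≤ x}).toReal

/-- Lower endpoint `a_X = sup {x : F x = 0}` of the support of a cdf `F`. -/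
noncomputable def lowerEnd (F : ℝ → ℝ) : EReal :=
  sSup ((fun x : ℝ => (x : EReal)) '' {x | F x = 0})

/-- Upper endpoint `b_X = inf {x : F x = 1}` of the support of a cdf `F`. -/
noncomputable def upperEnd (F : ℝ → ℝ) : EReal :=
  sInf ((fun x : ℝ => (x : EReal)) '' {x | F x = 1})

/-- Strict stationarity of the sequence `X 1, X 2, …`. -/
def StrictlyStationary {Ω : Type*} [MeasurableSpace Ω] (P : Measure Ω)
    (X : ℕ → Ω → ℝ) : Prop :=
  ∀ (k t : ℕ),
    Measure.map (fun ω => fun i : Fin k => X (1 + t + (i : ℕ)) ω) P =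
      Measure.map (fun ω => fun i : Fin k => X (1 + (i : ℕ)) ω) P

/-- Temperate dependence with respect to the cdf `F`. -/
def TemperatelyDependent {Ω : Type*} [MeasurableSpace Ω] (P : Measure Ω)
    (X : ℕ → Ω → ℝ) (F : ℝ → ℝ) : Prop :=
  ∀ x : ℝ, lowerEnd F < (x : EReal) → (x : EReal) < upperEnd F →
    Tendsto (fun n => P {ω | x ≤ rmin X n ω}) atTop (nhds 0) ∧
    Tendsto (fun n => P {ω | rmax X n ω ≤ x}) atTop (nhds 0)

/-- The empirical cdf of the sample `X 1, …, X n`. -/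
noncomputable def empCDF {Ω : Type*} (X : ℕ → Ω → ℝ) (n : ℕ) (ω : Ω) (x : ℝ) : ℝ :=
  (n : ℝ)⁻¹ * ∑ t ∈ Finset.Icc 1 n, if X t ω ≤ x then (1 : ℝ) else 0

/-- The (weak) Glivenko–Cantelli property: `sup_x |F_n x - F x| → 0` in probability. -/
def GlivenkoCantelliProp {Ω : Type*} [MeasurableSpace Ω] (P : Measure Ω)
    (X : ℕ → Ω → ℝ) (F : ℝ → ℝ) : Prop :=
  ∀ ε : ℝ, 0 < ε →
    Tendsto (fun n => P {ω | ε ≤ ⨆ x : ℝ, |empCDF X n ω x - F x|}) atTop (nhds 0)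

/-- The quantile function `F⁻¹ t = inf {x : F x ≥ t}`. -/
noncomputable def quantile (F : ℝ → ℝ) (t : ℝ) : ℝ := sInf {x | t ≤ F x}

/-- Convergence in probability of `Z n` to the constant `c`. -/
def TendstoInProb {Ω : Type*} [MeasurableSpace Ω] (P : Measure Ω)
    (Z : ℕ → Ω → ℝ) (c : ℝ) : Prop :=
  ∀ ε : ℝ, 0 < ε → Tendsto (fun n => P {ω | ε ≤ |Z n ω - c|}) atTop (nhds 0)



private lemma abs_telescope_le (f : ℕ → ℝ) {u v : ℕ} (h : u ≤ v) :
    |f v - f u| ≤ ∑ j ∈ Finset.Ico u v, |f (j+1) - f j| := by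
  induction v, h using Nat.le_induction with
  | base => simp
  | succ v hv ih =>
    rw [Finset.sum_Ico_succ_top hv]
    have h1 : |f (v+1) - f u| ≤ |f v - f u| + |f (v+1) - f v| := by
      have := abs_add_le (f v - f u) (f (v+1) - f v)
      simpa [show f v - f u + (f (v+1) - f v) = f (v+1) - f u by ring] using this
    exact h1.trans (by gcongr)

private lemma k_mono (k : ℕ → ℕ) : ∀ N, (∀ i < N, k i < k (i+1)) → k 0 ≤ k N := by
  intro N
  induction N with
  | zero => exact fun _ => le_refl _
  | succ N ih => exact fun hk => le_trans (ih (fun i hi => hk i (Nat.lt_succ_of_lt hi))) (hk N (Nat.lt_succ_self N)).le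

private lemma grouping_le (f : ℕ → ℝ) (k : ℕ → ℕ) :
    ∀ N, (∀ i < N, k i < k (i+1)) →
      ∑ i ∈ Finset.range N, |f (k (i+1)) - f (k i)| ≤
        ∑ j ∈ Finset.Ico (k 0) (k N), |f (j+1) - f j| := by
  intro N
  induction N with
  | zero => simp
  | succ N ih =>
    intro hk
    have hk' : ∀ i < N, k i < k (i+1) := fun i hi => hk i (Nat.lt_succ_of_lt hi)
    have h0N : k 0 ≤ k N := k_mono k N hk' 
    rw [Finset.sum_range_succ,
        ← Finset.sum_Ico_consecutive _ h0N (hk N (Nat.lt_succ_self N)).le]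
    exact add_le_add (ih hk') (abs_telescope_le f (hk N (Nat.lt_succ_self N)).le)

private lemma grouping_le' (f : ℕ → ℝ) (k : ℕ → ℕ) (N m : ℕ)
    (hk : ∀ i < N, k i < k (i+1)) (hm : k N ≤ m) :
    ∑ i ∈ Finset.range N, |f (k (i+1)) - f (k i)| ≤
      ∑ j ∈ Finset.range m, |f (j+1) - f j| := by
  refine (grouping_le f k N hk).trans ?_
  refine Finset.sum_le_sum_of_subset_of_nonneg ?_ (fun _ _ _ => abs_nonneg _)
  intro j hj
  simp only [Finset.mem_Ico, Finset.mem_range] at *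
  omega

private lemma osc_integral (g : ℝ → ℝ) (hg : Integrable g) {u v : ℝ} (huv : u ≤ v) (ε₁ : ℝ)
    (hosc : ∀ x ∈ Set.Icc u v, ∀ y ∈ Set.Icc u v, |g x - g y| < ε₁) :
    ∫ x in u..v, |g x| ≤ |∫ x in u..v, g x| + 2*ε₁*(v-u) := by
  have hu : u ∈ Set.Icc u v := ⟨le_refl _, huv⟩
  have hii : IntervalIntegrable g volume u v := hg.intervalIntegrable
  have hai : IntervalIntegrable (fun x => |g x|) volume u v := hg.abs.intervalIntegrable
  rcases le_or_gt ε₁ (g u) with hc | hc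
  · -- g positive on the interval
    have hpos : ∀ x ∈ Set.Icc u v, 0 ≤ g x := fun x hx => by
      have := hosc u hu x hx; rw [abs_lt] at this; linarith
    have : ∫ x in u..v, |g x| = ∫ x in u..v, g x := by
      apply intervalIntegral.integral_congr
      intro x hx
      rw [Set.uIcc_of_le huv] at hx
      exact abs_of_nonneg (hpos x hx)
    rw [this]
    have h2 : (0:ℝ) ≤ 2*ε₁*(v-u) := by
      have : (0:ℝ) < ε₁ := lt_of_le_of_lt (abs_nonneg _) (hosc u hu u hu)
      nlinarith
    linarith [le_abs_self (∫ x in u..v, g x)]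
  · rcases le_or_gt (g u) (-ε₁) with hc2 | hc2
    · have hneg : ∀ x ∈ Set.Icc u v, g x ≤ 0 := fun x hx => by
        have := hosc u hu x hx; rw [abs_lt] at this; linarith
      have : ∫ x in u..v, |g x| = ∫ x in u..v, (-g x) := by
        apply intervalIntegral.integral_congr
        intro x hx
        rw [Set.uIcc_of_le huv] at hx
        exact abs_of_nonpos (hneg x hx)
      rw [this, intervalIntegral.integral_neg]
      have h2 : (0:ℝ) ≤ 2*ε₁*(v-u) := by
        have : (0:ℝ) < ε₁ := lt_of_le_of_lt (abs_nonneg _) (hosc u hu u hu)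
        nlinarith
      linarith [neg_le_abs (∫ x in u..v, g x)]
    · -- |g| < 2ε₁ on the interval
      have hsm : ∀ x ∈ Set.Icc u v, |g x| ≤ 2*ε₁ := fun x hx => by
        have := hosc x hx u hu; rw [abs_lt] at this; rw [abs_le]; constructor <;> linarith
      have : ∫ x in u..v, |g x| ≤ ∫ x in u..v, (2*ε₁ : ℝ) :=
        intervalIntegral.integral_mono_on huv hai intervalIntegrable_const hsm
      rw [intervalIntegral.integral_const] at this
      rw [smul_eq_mul] at this
      linarith [abs_nonneg (∫ x in u..v, g x)]

section CdfFacts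
variable {Ω : Type*} [MeasurableSpace Ω] (P : Measure Ω) [IsProbabilityMeasure P] (Y : Ω → ℝ)

private lemma cdf_nonneg (x : ℝ) : 0 ≤ cdfOf P Y x := ENNReal.toReal_nonneg

private lemma cdf_le_one (x : ℝ) : cdfOf P Y x ≤ 1 := by
  have h1 : (P {ω | Y ω ≤ x}).toReal ≤ (P Set.univ).toReal :=
    ENNReal.toReal_mono (measure_ne_top P _) (measure_mono (Set.subset_univ _))
  simpa [cdfOf] using h1

private lemma cdf_mono : Monotone (cdfOf P Y) := fun x y hxy =>
  ENNReal.toReal_mono (measure_ne_top P _) (measure_mono (fun ω h => le_trans h hxy))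

private lemma cdf_exists_ge (hY : Measurable Y) (t : ℝ) (ht : t < 1) :
    ∃ x : ℝ, t ≤ cdfOf P Y x := by
  set s : ℕ → Set Ω := fun n => {ω | Y ω ≤ (n : ℝ)} with hs
  have hmono : Monotone s := fun m n hmn ω h => by
    simp only [s, Set.mem_setOf_eq] at *
    exact le_trans h (Nat.cast_le.mpr hmn)
  have hunion : (⋃ n, s n) = Set.univ := by
    ext ω; simp only [Set.mem_iUnion, Set.mem_univ, iff_true]
    obtain ⟨n, hn⟩ := exists_nat_ge (Y ω); exact ⟨n, hn⟩
  have h1 : Tendsto (fun n => P (s n)) atTop (nhds 1) := by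
    have := tendsto_measure_iUnion_atTop (μ := P) hmono
    rw [hunion] at this
    simpa [Function.comp_def] using this
  have h2 : Tendsto (fun n => (P (s n)).toReal) atTop (nhds 1) := by
    have := (ENNReal.tendsto_toReal (by norm_num : (1 : ENNReal) ≠ ⊤)).comp h1
    simpa [Function.comp_def] using this
  have h3 : ∀ᶠ n in atTop, t < (P (s n)).toReal := h2.eventually_const_lt ht
  obtain ⟨n, hn⟩ := h3.exists
  exact ⟨(n : ℝ), hn.le⟩

private lemma cdf_exists_lt (hY : Measurable Y) (t : ℝ) (ht : 0 < t) :
    ∃ x : ℝ, cdfOf P Y x < t := by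
  set s : ℕ → Set Ω := fun n => {ω | Y ω ≤ -(n : ℝ)} with hs
  have hanti : Antitone s := fun m n hmn ω h => by
    simp only [s, Set.mem_setOf_eq] at *
    exact le_trans h (neg_le_neg (Nat.cast_le.mpr hmn))
  have hinter : (⋂ n, s n) = ∅ := by
    ext ω; simp only [Set.mem_iInter, Set.mem_empty_iff_false, iff_false, not_forall]
    obtain ⟨n, hn⟩ := exists_nat_gt (-(Y ω))
    exact ⟨n, by simp only [s, Set.mem_setOf_eq]; push_neg; linarith⟩
  have h1 : Tendsto (fun n => P (s n)) atTop (nhds 0) := by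
    have := tendsto_measure_iInter_atTop (μ := P) (s := s)
      (fun n => ((hY measurableSet_Iic).nullMeasurableSet : NullMeasurableSet (s n) P))
      hanti ⟨0, measure_ne_top P _⟩
    rw [hinter] at this
    simpa [Function.comp_def] using this
  have h2 : Tendsto (fun n => (P (s n)).toReal) atTop (nhds 0) := by
    have := (ENNReal.tendsto_toReal (by norm_num : (0 : ENNReal) ≠ ⊤)).comp h1
    simpa [Function.comp_def] using this
  have h3 : ∀ᶠ n in atTop, (P (s n)).toReal < t := h2.eventually_lt_const ht
  obtain ⟨n, hn⟩ := h3.exists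
  exact ⟨-(n : ℝ), hn⟩

end CdfFacts

private lemma F_strict {F : ℝ → ℝ} (hFm : Monotone F)
    (hF0 : ∀ x, 0 ≤ F x) (hF1 : ∀ x, F x ≤ 1)
    (hex1 : ∀ t : ℝ, t < 1 → ∃ x, t ≤ F x) (hex0 : ∀ t : ℝ, 0 < t → ∃ x, F x < t)
    (hq : ContinuousOn (quantile F) (Set.Ioo 0 1))
    {c d : ℝ} (hcd : c < d) (hc : lowerEnd F ≤ (c : EReal)) (hd : (d : EReal) ≤ upperEnd F) :
    F c < F d := by
  rcases lt_or_eq_of_le (hFm hcd.le) with h | h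
  · exact h
  exfalso
  set v := F c with hv
  have hv1 : v < 1 := by
    by_contra hle; push_neg at hle
    have h1 : F c = 1 := le_antisymm (hF1 c) hle
    have h2 : upperEnd F ≤ (c : EReal) := sInf_le ⟨c, h1, rfl⟩
    have := le_trans hd h2
    rw [EReal.coe_le_coe_iff] at this
    linarith
  have hv0 : 0 < v := by
    by_contra hle; push_neg at hle
    have hFd0 : F d = 0 := le_antisymm (h ▸ hle) (hF0 d)
    have h2 : (d : EReal) ≤ lowerEnd F := le_sSup ⟨d, hFd0, rfl⟩
    have := le_trans h2 hc
    rw [EReal.coe_le_coe_iff] at this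
    linarith
  -- quantile at v is ≤ c
  obtain ⟨x₀, hx₀⟩ := hex0 v hv0
  have hbdd : BddBelow {x | v ≤ F x} := by
    refine ⟨x₀, fun y hy => ?_⟩
    by_contra hlt; push_neg at hlt
    exact absurd (le_trans hy (hFm hlt.le)) (not_le.mpr hx₀)
  have hqc : quantile F v ≤ c := csInf_le hbdd (le_refl v)
  -- sequence approaching v from the right
  set w : ℕ → ℝ := fun k => v + (1 - v)/(k + 2) with hwdef
  have hwv : Tendsto w atTop (nhds v) := by
    have h1 : Tendsto (fun k : ℕ => (1 - v)/((k:ℝ) + 2)) atTop (nhds 0) := by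
      apply Tendsto.div_atTop tendsto_const_nhds
      exact tendsto_atTop_add_const_right _ 2 tendsto_natCast_atTop_atTop
    simpa using tendsto_const_nhds.add h1
  have hmem : ∀ k : ℕ, w k ∈ Set.Ioo (0:ℝ) 1 := by
    intro k
    have hk2 : (0:ℝ) < (k:ℝ) + 2 := by positivity
    constructor
    · have : 0 < (1 - v)/((k:ℝ) + 2) := div_pos (by linarith) hk2
      simp only [w]; linarith
    · have : (1 - v)/((k:ℝ) + 2) < (1 - v) := by
        rw [div_lt_iff₀ hk2]
        nlinarith
      simp only [w]; linarith
  have hlim : Tendsto (fun k => quantile F (w k)) atTop (nhds (quantile F v)) := by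
    have hcw : ContinuousWithinAt (quantile F) (Set.Ioo 0 1) v := hq v ⟨hv0, hv1⟩
    exact hcw.tendsto.comp (tendsto_nhdsWithin_iff.mpr ⟨hwv, Filter.Eventually.of_forall hmem⟩)
  have hqd : ∀ k : ℕ, d ≤ quantile F (w k) := by
    intro k
    obtain ⟨x₁, hx₁⟩ := hex1 (w k) (hmem k).2
    refine le_csInf ⟨x₁, hx₁⟩ ?_
    intro y hy
    by_contra hlt; push_neg at hlt
    have : F y ≤ v := h ▸ hFm hlt.le
    have hwk : v < w k := by
      have hk2 : (0:ℝ) < (k:ℝ) + 2 := by positivity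
      have : 0 < (1 - v)/((k:ℝ) + 2) := div_pos (by linarith) hk2
      simp only [w]; linarith
    simp only [Set.mem_setOf_eq] at hy
    linarith
  have := ge_of_tendsto hlim (Filter.Eventually.of_forall hqd)
  linarith

section Stationary
variable {Ω : Type*} [MeasurableSpace Ω] (P : Measure Ω) [IsProbabilityMeasure P]
  (X : ℕ → Ω → ℝ)

private lemma marginal_eq (hmeas : ∀ t, Measurable (X t)) (hss : StrictlyStationary P X)
    (t : ℕ) (q : ℝ) :
    P {ω | X (1+t) ω ≤ q} = P {ω | X 1 ω ≤ q} := by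
  have h := hss 1 t
  have hs : MeasurableSet {g : Fin 1 → ℝ | g 0 ≤ q} :=
    measurableSet_le (measurable_pi_apply 0) measurable_const
  have hm1 : Measurable (fun ω => fun i : Fin 1 => X (1 + t + (i : ℕ)) ω) :=
    measurable_pi_lambda _ (fun _ => hmeas _)
  have hm2 : Measurable (fun ω => fun i : Fin 1 => X (1 + (i : ℕ)) ω) :=
    measurable_pi_lambda _ (fun _ => hmeas _)
  have h2 := congrArg (fun μ : Measure (Fin 1 → ℝ) => μ {g : Fin 1 → ℝ | g 0 ≤ q}) h
  rw [Measure.map_apply hm1 hs, Measure.map_apply hm2 hs] at h2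
  have e1 : (fun ω => fun i : Fin 1 => X (1 + t + (i : ℕ)) ω) ⁻¹' {g : Fin 1 → ℝ | g 0 ≤ q}
      = {ω | X (1+t) ω ≤ q} := by
    ext ω; simp [Set.mem_preimage, Set.mem_setOf_eq]
  have e2 : (fun ω => fun i : Fin 1 => X (1 + (i : ℕ)) ω) ⁻¹' {g : Fin 1 → ℝ | g 0 ≤ q}
      = {ω | X 1 ω ≤ q} := by
    ext ω; simp [Set.mem_preimage, Set.mem_setOf_eq]
  rw [e1, e2] at h2
  exact h2

private lemma Sbad_null (hmeas : ∀ t, Measurable (X t)) (hss : StrictlyStationary P X) :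
    P {ω | ∃ t : ℕ, ((X (1+t) ω : EReal) < lowerEnd (cdfOf P (X 1)) ∨
        upperEnd (cdfOf P (X 1)) < (X (1+t) ω : EReal))} = 0 := by
  set F := cdfOf P (X 1) with hF
  have key : ∀ t : ℕ, ∀ q : ℚ,
      P ({ω | F q = 0 ∧ X (1+t) ω ≤ (q:ℝ)} ∪ {ω | F q = 1 ∧ (q:ℝ) < X (1+t) ω}) = 0 := by
    intro t q
    refine measure_union_null ?_ ?_
    · by_cases hq : F (q:ℝ) = 0
      · have h0 : P {ω | X (1+t) ω ≤ (q:ℝ)} = 0 := by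
          rw [marginal_eq P X hmeas hss t]
          have := hq
          rw [hF] at this
          simp only [cdfOf] at this
          rcases (ENNReal.toReal_eq_zero_iff _).mp this with h | h
          · exact h
          · exact absurd h (measure_ne_top P _)
        exact measure_mono_null (fun ω hω => hω.2) h0
      · have : {ω | F q = 0 ∧ X (1+t) ω ≤ (q:ℝ)} = ∅ := by
          ext ω; simp only [Set.mem_setOf_eq, Set.mem_empty_iff_false, iff_false]
          exact fun hc => hq hc.1
        rw [this]; exact measure_empty
    · by_cases hq : F (q:ℝ) = 1
      · have h1 : P {ω | X (1+t) ω ≤ (q:ℝ)} = 1 := by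
          rw [marginal_eq P X hmeas hss t]
          have := hq
          rw [hF] at this
          simp only [cdfOf] at this
          exact (ENNReal.toReal_eq_one_iff _).mp this
        have h0 : P {ω | (q:ℝ) < X (1+t) ω} = 0 := by
          have hcompl : {ω | (q:ℝ) < X (1+t) ω} = {ω | X (1+t) ω ≤ (q:ℝ)}ᶜ := by
            ext ω; simp [not_le]
          rw [hcompl]
          have hms : MeasurableSet {ω | X (1+t) ω ≤ (q:ℝ)} := hmeas (1+t) measurableSet_Iic
          rw [measure_compl hms (measure_ne_top P _), h1, measure_univ]
          simp
        exact measure_mono_null (fun ω hω => hω.2) h0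
      · have : {ω | F q = 1 ∧ (q:ℝ) < X (1+t) ω} = ∅ := by
          ext ω; simp only [Set.mem_setOf_eq, Set.mem_empty_iff_false, iff_false]
          exact fun hc => hq hc.1
        rw [this]; exact measure_empty
  refine measure_mono_null ?_ (measure_iUnion_null (fun t : ℕ =>
    measure_iUnion_null (fun q : ℚ => key t q)))
  intro ω hω
  obtain ⟨t, ht⟩ := hω
  simp only [Set.mem_iUnion]
  refine ⟨t, ?_⟩
  rcases ht with hlow | hupp
  · obtain ⟨e, ⟨y, hy0, rfl⟩, hey⟩ := lt_sSup_iff.mp hlow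
    rw [EReal.coe_lt_coe_iff] at hey
    obtain ⟨q, hq1, hq2⟩ := exists_rat_btwn hey
    refine ⟨q, Or.inl ⟨?_, hq1.le⟩⟩
    exact le_antisymm (hy0 ▸ cdf_mono P (X 1) hq2.le) (cdf_nonneg P (X 1) _)
  · obtain ⟨e, ⟨y, hy1, rfl⟩, hey⟩ := sInf_lt_iff.mp hupp
    rw [EReal.coe_lt_coe_iff] at hey
    obtain ⟨q, hq1, hq2⟩ := exists_rat_btwn hey
    refine ⟨q, Or.inr ⟨?_, hq2⟩⟩
    exact le_antisymm (cdf_le_one P (X 1) _) (hy1 ▸ cdf_mono P (X 1) hq1.le)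

end Stationary

section EmpCDF
variable {Ω : Type*} (X : ℕ → Ω → ℝ)

private lemma empCDF_nonneg (n : ℕ) (ω : Ω) (x : ℝ) : 0 ≤ empCDF X n ω x := by
  apply mul_nonneg (by positivity)
  apply Finset.sum_nonneg
  intro t _; split_ifs <;> norm_num

private lemma empCDF_le_one (n : ℕ) (ω : Ω) (x : ℝ) : empCDF X n ω x ≤ 1 := by
  unfold empCDF
  rcases Nat.eq_zero_or_pos n with h | h
  · simp [h]
  · have hsum : ∑ t ∈ Finset.Icc 1 n, (if X t ω ≤ x then (1:ℝ) else 0) ≤ (n : ℝ) := by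
      calc ∑ t ∈ Finset.Icc 1 n, (if X t ω ≤ x then (1:ℝ) else 0)
          ≤ ∑ t ∈ Finset.Icc 1 n, (1:ℝ) := by
            apply Finset.sum_le_sum; intro t _; split_ifs <;> norm_num
        _ = (n : ℝ) := by simp [Nat.card_Icc]
    have hn : (0:ℝ) < n := by exact_mod_cast h
    rw [inv_mul_le_iff₀ hn] -- empCDF ≤ 1 ↔ sum ≤ n ... careful direction
    simpa using hsum

private lemma bddAbove_empCDF_diff (F : ℝ → ℝ) (hF0 : ∀ x, 0 ≤ F x) (hF1 : ∀ x, F x ≤ 1)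
    (n : ℕ) (ω : Ω) : BddAbove (Set.range fun x => |empCDF X n ω x - F x|) := by
  refine ⟨2, fun z hz => ?_⟩
  obtain ⟨x, rfl⟩ := hz
  have h1 := empCDF_nonneg X n ω x
  have h2 := empCDF_le_one X n ω x
  have h3 := hF0 x
  have h4 := hF1 x
  rw [abs_le]; constructor <;> linarith

private lemma miss_window (F : ℝ → ℝ) (hF0 : ∀ x, 0 ≤ F x) (hF1 : ∀ x, F x ≤ 1)
    {n : ℕ} {ω : Ω} {c d : ℝ}
    (hmiss : ∀ t ∈ Finset.Icc 1 n, X t ω ∉ Set.Icc c d) :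
    (F d - F c)/2 ≤ ⨆ x : ℝ, |empCDF X n ω x - F x| := by
  set e := (F d - F c)/2 with he
  have hbdd := bddAbove_empCDF_diff X F hF0 hF1 n ω
  have hdc : empCDF X n ω d ≤ empCDF X n ω c := by
    unfold empCDF
    have hsum : ∑ t ∈ Finset.Icc 1 n, (if X t ω ≤ d then (1:ℝ) else 0)
        ≤ ∑ t ∈ Finset.Icc 1 n, (if X t ω ≤ c then (1:ℝ) else 0) := by
      apply Finset.sum_le_sum
      intro t ht
      split_ifs with h1 h2
      · norm_num
      · exact absurd ⟨(not_le.mp h2).le, h1⟩ (hmiss t ht)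
      · norm_num
      · norm_num
    exact mul_le_mul_of_nonneg_left hsum (by positivity)
  rcases le_or_gt e (|empCDF X n ω d - F d|) with h | h
  · exact h.trans (le_ciSup hbdd d)
  · have h1 : e ≤ |empCDF X n ω c - F c| := by
      rw [abs_lt] at h
      have := le_abs_self (empCDF X n ω c - F c)
      have hfc : F c = F d - 2*e := by rw [he]; ring
      linarith
    exact h1.trans (le_ciSup hbdd c)

end EmpCDF

section SortedList

private lemma sorted_getD_mono {l : List ℝ} (hs : List.Pairwise (· ≤ ·) l) {i j : ℕ}
    (hij : i ≤ j) (hj : j < l.length) : l.getD i 0 ≤ l.getD j 0 := by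
  have hi : i < l.length := lt_of_le_of_lt hij hj
  rw [List.getD_eq_getElem l 0 hi, List.getD_eq_getElem l 0 hj]
  have := hs.rel_get_of_le (a := ⟨i, hi⟩) (b := ⟨j, hj⟩) (by exact hij)
  simpa [List.get_eq_getElem] using this

/-- The main deterministic upper bound. -/
private lemma upper_bound (g h₀ : ℝ → ℝ) (hg : Integrable g volume) (a b : ℝ)
    (hzero : ∀ x ∉ Set.Icc a b, g x = 0)
    (lo hi : EReal)
    (hAC' : ∀ u v : ℝ, u ≤ v → lo ≤ (u:EReal) → (v:EReal) ≤ hi →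
      h₀ v - h₀ u = ∫ x in u..v, g x)
    (l : List ℝ) (hsort : l.Pairwise (· ≤ ·))
    (hmem : ∀ x ∈ l, lo ≤ (x:EReal) ∧ (x:EReal) ≤ hi) :
    ∑ j ∈ Finset.range (l.length - 1), |h₀ (l.getD (j+1) 0) - h₀ (l.getD j 0)|
      ≤ ∫ x in Set.Icc a b, |g x| := by
  have hVnn : 0 ≤ ∫ x in Set.Icc a b, |g x| :=
    setIntegral_nonneg measurableSet_Icc (fun x _ => abs_nonneg _)
  rcases Nat.eq_zero_or_pos l.length with hn | hn
  · simp [hn, hVnn]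
  set n := l.length with hlen
  set m : ℕ → ℝ := fun j => l.getD j 0 with hm
  have hmemj : ∀ j < n, lo ≤ (m j : EReal) ∧ (m j : EReal) ≤ hi := fun j hj => by
    have : m j ∈ l := by
      rw [hm]; simp only
      rw [List.getD_eq_getElem l 0 hj]
      exact List.getElem_mem hj
    exact hmem _ this
  have hstep : ∀ j, j + 1 < n →
      |h₀ (m (j+1)) - h₀ (m j)| ≤ ∫ x in (m j)..(m (j+1)), |g x| := by
    intro j hj
    have hle : m j ≤ m (j+1) := sorted_getD_mono hsort (Nat.le_succ j) hj
    rw [hAC' (m j) (m (j+1)) hle (hmemj j (Nat.lt_of_succ_lt hj)).1 (hmemj (j+1) hj).2]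
    exact intervalIntegral.abs_integral_le_integral_abs hle
  calc ∑ j ∈ Finset.range (n - 1), |h₀ (m (j+1)) - h₀ (m j)|
      ≤ ∑ j ∈ Finset.range (n - 1), ∫ x in (m j)..(m (j+1)), |g x| := by
        apply Finset.sum_le_sum
        intro j hj
        rw [Finset.mem_range] at hj
        exact hstep j (by omega)
    _ = ∫ x in (m 0)..(m (n-1)), |g x| :=
        intervalIntegral.sum_integral_adjacent_intervals
          (fun k _ => hg.abs.intervalIntegrable)
    _ ≤ ∫ x, |g x| := by
        have hle : m 0 ≤ m (n-1) := sorted_getD_mono hsort (Nat.zero_le _) (by omega)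
        rw [intervalIntegral.integral_of_le hle]
        exact setIntegral_le_integral hg.abs (Filter.Eventually.of_forall (fun x => abs_nonneg _))
    _ = ∫ x in Set.Icc a b, |g x| := by
        have habs : (fun x => |g x|) = Set.indicator (Set.Icc a b) (fun x => |g x|) := by
          funext x
          by_cases hx : x ∈ Set.Icc a b
          · rw [Set.indicator_of_mem hx]
          · rw [Set.indicator_of_notMem hx, hzero x hx, abs_zero]
        conv_lhs => rw [habs]
        exact integral_indicator measurableSet_Icc

end SortedList

private lemma sum_Icc_two (f : ℕ → ℝ) (n : ℕ) :
    ∑ t ∈ Finset.Icc 2 n, |f (t-1) - f (t-2)| = ∑ j ∈ Finset.range (n-1), |f (j+1) - f j| := by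
  rw [← Finset.Ico_add_one_right_eq_Icc, Finset.sum_Ico_eq_sum_range]
  have hn : n + 1 - 2 = n - 1 := by omega
  rw [hn]
  apply Finset.sum_congr rfl
  intro j _
  have e1 : 2 + j - 1 = j + 1 := by omega
  have e2 : 2 + j - 2 = j := by omega
  rw [e1, e2]
set_option maxHeartbeats 1000000 in
theorem stmt_6 {Ω : Type*} [MeasurableSpace Ω] (P : Measure Ω) [IsProbabilityMeasure P]
    (X : ℕ → Ω → ℝ) (hmeas : ∀ t, Measurable (X t))
    (hss : StrictlyStationary P X)
    (htd : TemperatelyDependent P X (cdfOf P (X 1)))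
    (hgc : GlivenkoCantelliProp P X (cdfOf P (X 1)))
    (p : ℝ) (hp : 2 < p)
    (hmom : Integrable (fun ω => |X 1 ω| ^ p) P)
    (hcont : Continuous (cdfOf P (X 1)))
    (hqcont : ContinuousOn (quantile (cdfOf P (X 1))) (Set.Ioo 0 1))
    (h0 h0star : ℝ → ℝ)
    (hAC : ∀ u v : ℝ, u ≤ v →
      lowerEnd (cdfOf P (X 1)) ≤ (u : EReal) → (v : EReal) ≤ upperEnd (cdfOf P (X 1)) →
      h0 v - h0 u = ∫ x in Set.Icc u v, h0star x)
    (a b : ℝ) (hab : a ≤ b)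
    (ha : lowerEnd (cdfOf P (X 1)) ≤ (a : EReal)) (hb : (b : EReal) ≤ upperEnd (cdfOf P (X 1)))
    (hderiv_cont : ContinuousOn h0star (Set.Icc a b))
    (hderiv_zero : ∀ x : ℝ, x ∉ Set.Icc a b → h0star x = 0) :
    TendstoInProb P
      (fun n ω => ∑ t ∈ Finset.Icc 2 n,
        |h0 (orderStat X n t ω) - h0 (orderStat X n (t - 1) ω)|)
      (∫ x in Set.Icc a b, |h0star x|) := by
  classical
  have hF0 : ∀ x, 0 ≤ cdfOf P (X 1) x := cdf_nonneg P (X 1)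
  have hF1 : ∀ x, cdfOf P (X 1) x ≤ 1 := cdf_le_one P (X 1)
  have hFm : Monotone (cdfOf P (X 1)) := cdf_mono P (X 1)
  have hex1 := cdf_exists_ge P (X 1) (hmeas 1)
  have hex0 := cdf_exists_lt P (X 1) (hmeas 1)
  set F := cdfOf P (X 1) with hFdef
  -- integrability of h0star
  have hgind : h0star = Set.indicator (Set.Icc a b) h0star := by
    funext x
    by_cases hx : x ∈ Set.Icc a b
    · rw [Set.indicator_of_mem hx]
    · rw [Set.indicator_of_notMem hx, hderiv_zero x hx]
  have hgInt : Integrable h0star := by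
    rw [hgind]
    exact (integrable_indicator_iff measurableSet_Icc).mpr hderiv_cont.integrableOn_Icc
  have hAC' : ∀ u v : ℝ, u ≤ v → lowerEnd F ≤ (u:EReal) → (v:EReal) ≤ upperEnd F →
      h0 v - h0 u = ∫ x in u..v, h0star x := by
    intro u v huv h1 h2
    rw [hAC u v huv h1 h2, integral_Icc_eq_integral_Ioc, intervalIntegral.integral_of_le huv]
  set V := ∫ x in Set.Icc a b, |h0star x| with hVdef
  have hV0 : 0 ≤ V := setIntegral_nonneg measurableSet_Icc (fun x _ => abs_nonneg _)
  set Sbad := {ω | ∃ t : ℕ, ((X (1+t) ω : EReal) < lowerEnd F ∨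
      upperEnd F < (X (1+t) ω : EReal))} with hSbaddef
  have hSbad : P Sbad = 0 := Sbad_null P X hmeas hss
  -- the deterministic upper bound
  have hUB : ∀ n : ℕ, ∀ ω, ω ∉ Sbad →
      (∑ t ∈ Finset.Icc 2 n, |h0 (orderStat X n t ω) - h0 (orderStat X n (t-1) ω)|) ≤ V := by
    intro n ω hω
    set lst := List.insertionSort (· ≤ ·) ((List.range n).map fun s => X (s + 1) ω) with hlst
    have hlen : lst.length = n := by
      rw [hlst, (List.perm_insertionSort _ _).length_eq, List.length_map, List.length_range]
    have hgood : ∀ t : ℕ, lowerEnd F ≤ ((X (1+t) ω : ℝ) : EReal) ∧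
        ((X (1+t) ω : ℝ):EReal) ≤ upperEnd F := by
      intro t
      rw [hSbaddef] at hω
      simp only [Set.mem_setOf_eq, not_exists, not_or, not_lt] at hω
      exact hω t
    have hmeml : ∀ x ∈ lst, lowerEnd F ≤ (x:EReal) ∧ (x:EReal) ≤ upperEnd F := by
      intro x hx
      rw [hlst, (List.perm_insertionSort _ _).mem_iff, List.mem_map] at hx
      obtain ⟨s, _, rfl⟩ := hx
      have := hgood s
      rwa [Nat.add_comm 1 s] at this
    have key := upper_bound h0star h0 hgInt a b (fun x hx => hderiv_zero x hx)
      (lowerEnd F) (upperEnd F) hAC' lst (List.pairwise_insertionSort _ _) hmeml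
    have horder : ∀ t : ℕ, orderStat X n t ω = lst.getD (t - 1) 0 := fun t => rfl
    have hsum : (∑ t ∈ Finset.Icc 2 n,
        |h0 (orderStat X n t ω) - h0 (orderStat X n (t-1) ω)|)
        = ∑ j ∈ Finset.range (lst.length - 1),
            |h0 (lst.getD (j+1) 0) - h0 (lst.getD j 0)| := by
      rw [hlen, ← sum_Icc_two (fun j => h0 (lst.getD j 0)) n]
      apply Finset.sum_congr rfl
      intro t _
      rw [horder t, horder (t-1)]
      have : t - 1 - 1 = t - 2 := by omega
      rw [this]
    rw [hsum]
    exact key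
  intro ε hε
  rcases eq_or_lt_of_le hab with heq | hlt
  · -- degenerate case a = b : V = 0
    have hVz : V = 0 := by
      rw [hVdef, ← heq]
      rw [show volume.restrict (Set.Icc a a) = 0 from
        Measure.restrict_eq_zero.mpr (by simp)]
      exact integral_zero_measure _
    have hincl : ∀ n : ℕ, {ω | ε ≤ |(∑ t ∈ Finset.Icc 2 n,
        |h0 (orderStat X n t ω) - h0 (orderStat X n (t-1) ω)|) - V|} ⊆ Sbad := by
      intro n ω hω
      by_contra hn
      simp only [Set.mem_setOf_eq] at hω
      have h1 := hUB n ω hn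
      have h2 : 0 ≤ ∑ t ∈ Finset.Icc 2 n,
          |h0 (orderStat X n t ω) - h0 (orderStat X n (t-1) ω)| :=
        Finset.sum_nonneg (fun t _ => abs_nonneg _)
      rw [hVz] at h1
      have hS0 : (∑ t ∈ Finset.Icc 2 n,
          |h0 (orderStat X n t ω) - h0 (orderStat X n (t-1) ω)|) = 0 := le_antisymm h1 h2
      rw [hS0, hVz, sub_zero, abs_zero] at hω
      linarith
    have hz : ∀ n : ℕ, P {ω | ε ≤ |(∑ t ∈ Finset.Icc 2 n,
        |h0 (orderStat X n t ω) - h0 (orderStat X n (t-1) ω)|) - V|} = 0 :=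
      fun n => measure_mono_null (hincl n) hSbad
    have : (fun n => P {ω | ε ≤ |(∑ t ∈ Finset.Icc 2 n,
        |h0 (orderStat X n t ω) - h0 (orderStat X n (t-1) ω)|) - V|}) = fun _ => 0 :=
      funext hz
    rw [this]
    exact tendsto_const_nhds
  · -- main case : a < b
    obtain ⟨M, hM0, hMb⟩ : ∃ M, 0 ≤ M ∧ ∀ x ∈ Set.Icc a b, |h0star x| ≤ M := by
      obtain ⟨C, hC⟩ := isCompact_Icc.exists_bound_of_continuousOn hderiv_cont
      exact ⟨max C 0, le_max_right _ _, fun x hx => (hC x hx).trans (le_max_left _ _)⟩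
    have hba : 0 < b - a := by linarith
    set ε₁ := ε / (4 * (b - a)) with hε₁def
    have hε₁pos : 0 < ε₁ := div_pos hε (by linarith)
    obtain ⟨δ, hδpos, hδ⟩ : ∃ δ, 0 < δ ∧ ∀ x ∈ Set.Icc a b, ∀ y ∈ Set.Icc a b,
        |x - y| < δ → |h0star x - h0star y| < ε₁ := by
      have huc := isCompact_Icc.uniformContinuousOn_of_continuous hderiv_cont
      obtain ⟨δ, hδpos, hδ⟩ := Metric.uniformContinuousOn_iff.mp huc ε₁ hε₁pos
      refine ⟨δ, hδpos, fun x hx y hy hxy => ?_⟩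
      have := hδ x hx y hy (by rwa [Real.dist_eq])
      rwa [Real.dist_eq] at this
    set r := min (δ/3) (ε/(8*M + 8)) with hrdef
    have hrδ : r ≤ δ/3 := min_le_left _ _
    have hrε : r ≤ ε/(8*M + 8) := min_le_right _ _
    have hrpos : 0 < r := lt_min (by linarith) (div_pos hε (by linarith))
    set N := max 1 ⌈(b - a)/r⌉₊ with hNdef
    have hN1 : 1 ≤ N := le_max_left _ _
    have hNpos : (0:ℝ) < (N:ℝ) := by exact_mod_cast lt_of_lt_of_le Nat.one_pos hN1
    set ℓ := (b - a)/(N:ℝ) with hℓdef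
    have hℓpos : 0 < ℓ := div_pos hba hNpos
    have hℓr : ℓ ≤ r := by
      rw [hℓdef, div_le_iff₀ hNpos]
      have h1 : (b-a)/r ≤ (⌈(b-a)/r⌉₊ : ℝ) := Nat.le_ceil _
      have h2 : ((⌈(b-a)/r⌉₊ : ℕ):ℝ) ≤ (N:ℝ) := by exact_mod_cast le_max_right 1 ⌈(b - a)/r⌉₊
      have h3 : b - a = ((b-a)/r) * r := by field_simp
      nlinarith
    have hNl : (N:ℝ) * ℓ = b - a := by rw [hℓdef]; field_simp
    have hℓba : ℓ ≤ b - a := by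
      have h1 : (1:ℝ)*ℓ ≤ (N:ℝ)*ℓ :=
        mul_le_mul_of_nonneg_right (by exact_mod_cast hN1) hℓpos.le
      linarith
    -- the windows
    set cc : ℕ → ℝ := fun i => if i = N then b - ℓ/4 else a + i * ℓ with hccdef
    set dd : ℕ → ℝ := fun i => cc i + ℓ/4 with hdddef
    have hccval : ∀ i : ℕ, i ≠ N → cc i = a + i * ℓ := fun i hi => by
      simp only [hccdef, if_neg hi]
    have hccN : cc N = b - ℓ/4 := by simp only [hccdef, if_pos rfl]
    have hddval : ∀ i : ℕ, dd i = cc i + ℓ/4 := fun i => by simp only [hdddef]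
    have hcd : ∀ i : ℕ, cc i < dd i := fun i => by
      rw [hddval]; linarith
    have hcc_a : ∀ i : ℕ, i ≤ N → a ≤ cc i := by
      intro i hi
      by_cases h : i = N
      · rw [h, hccN]
        linarith
      · rw [hccval i h]
        nlinarith [(Nat.cast_nonneg i : (0:ℝ) ≤ (i:ℝ))]
    have hdd_b : ∀ i : ℕ, i ≤ N → dd i ≤ b := by
      intro i hi
      rw [hddval]
      by_cases h : i = N
      · rw [h, hccN]; linarith
      · rw [hccval i h]
        have hiN : (i:ℝ) + 1 ≤ (N:ℝ) := by exact_mod_cast (by omega : i + 1 ≤ N)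
        have hprod : ((i:ℝ)+1)*ℓ ≤ (N:ℝ)*ℓ := mul_le_mul_of_nonneg_right hiN hℓpos.le
        linarith [hNl, hprod]
    have hsep : ∀ i : ℕ, i < N → dd i < cc (i+1) := by
      intro i hi
      have hiN : i ≠ N := by omega
      rw [hddval, hccval i hiN]
      by_cases h : i + 1 = N
      · rw [h, hccN]
        have hNc : ((i:ℝ)+1) = (N:ℝ) := by exact_mod_cast h
        have hprod : ((i:ℝ)+1)*ℓ = b - a := by rw [hNc]; exact hNl
        linarith
      · rw [hccval (i+1) h]
        push_cast
        linarith
    have hgap : ∀ i : ℕ, i < N → dd (i+1) - cc i ≤ 2*ℓ := by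
      intro i hi
      have hiN : i ≠ N := by omega
      rw [hddval, hccval i hiN]
      by_cases h : i + 1 = N
      · rw [h, hccN]
        have hNc : ((i:ℝ)+1) = (N:ℝ) := by exact_mod_cast h
        have hprod : ((i:ℝ)+1)*ℓ = b - a := by rw [hNc]; exact hNl
        linarith
      · rw [hccval (i+1) h]
        push_cast
        linarith
    -- window probabilities
    have hwin : ∀ i ∈ Finset.range (N+1), 0 < (F (dd i) - F (cc i))/2 := by
      intro i hi
      rw [Finset.mem_range] at hi
      have hiN : i ≤ N := by omega
      have h2 : lowerEnd F ≤ ((cc i : ℝ) : EReal) :=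
        le_trans ha (EReal.coe_le_coe_iff.mpr (hcc_a i hiN))
      have h3 : ((dd i : ℝ):EReal) ≤ upperEnd F :=
        le_trans (EReal.coe_le_coe_iff.mpr (hdd_b i hiN)) hb
      have := F_strict hFm hF0 hF1 hex1 hex0 hqcont (hcd i) h2 h3
      linarith
    have hne : (Finset.range (N+1)).Nonempty := ⟨0, by simp⟩
    set εF := (Finset.range (N+1)).inf' hne (fun i => (F (dd i) - F (cc i))/2) with hεFdef
    have hεFpos : 0 < εF := (Finset.lt_inf'_iff hne).mpr hwin
    have hεFle : ∀ i ∈ Finset.range (N+1), εF ≤ (F (dd i) - F (cc i))/2 :=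
      fun i hi => Finset.inf'_le _ hi
    have hGC := hgc εF hεFpos
    -- main inclusion
    have hincl : ∀ n : ℕ,
        {ω | ε ≤ |(∑ t ∈ Finset.Icc 2 n,
            |h0 (orderStat X n t ω) - h0 (orderStat X n (t-1) ω)|) - V|}
          ⊆ Sbad ∪ {ω | εF ≤ ⨆ x : ℝ, |empCDF X n ω x - F x|} := by
      intro n ω hω
      by_contra hcon
      rw [Set.mem_union] at hcon
      push_neg at hcon
      obtain ⟨hS, hT⟩ := hcon
      simp only [Set.mem_setOf_eq] at hω hT
      -- witnesses in each window
      have hwit : ∀ i : ℕ, ∃ t : ℕ, i ≤ N → (t ∈ Finset.Icc 1 n ∧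
          X t ω ∈ Set.Icc (cc i) (dd i)) := by
        intro i
        by_cases hi : i ≤ N
        · by_contra hmiss
          push_neg at hmiss
          have hmiss' : ∀ t ∈ Finset.Icc 1 n, X t ω ∉ Set.Icc (cc i) (dd i) :=
            fun t ht => (hmiss t).2 ht
          have hsup := miss_window X F hF0 hF1 hmiss'
          exact hT (le_trans (hεFle i (Finset.mem_range.mpr (by omega))) hsup)
        · exact ⟨1, fun h => absurd h hi⟩
      choose tt htt using hwit
      set w : ℕ → ℝ := fun i => X (tt i) ω with hwdef
      have htt1 : ∀ i, i ≤ N → 1 ≤ tt i ∧ tt i ≤ n := by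
        intro i hi
        have h := (htt i hi).1
        rw [Finset.mem_Icc] at h
        exact h
      have hwmem : ∀ i, i ≤ N → w i ∈ Set.Icc (cc i) (dd i) := fun i hi => (htt i hi).2
      have hn1 : 1 ≤ n := le_trans (htt1 0 (by omega)).1 (htt1 0 (by omega)).2
      set lst := List.insertionSort (· ≤ ·) ((List.range n).map fun s => X (s + 1) ω) with hlst
      have hlen : lst.length = n := by
        rw [hlst, (List.perm_insertionSort _ _).length_eq, List.length_map, List.length_range]
      have hsort : lst.Pairwise (· ≤ ·) := List.pairwise_insertionSort _ _
      have hwlst : ∀ i, i ≤ N → w i ∈ lst := by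
        intro i hi
        rw [hlst, (List.perm_insertionSort _ _).mem_iff, List.mem_map]
        refine ⟨tt i - 1, List.mem_range.mpr (by have := htt1 i hi; omega), ?_⟩
        have h : tt i - 1 + 1 = tt i := by have := htt1 i hi; omega
        rw [h]
      have hkk : ∀ i : ℕ, ∃ j : ℕ, i ≤ N → (j < n ∧ lst.getD j 0 = w i) := by
        intro i
        by_cases hi : i ≤ N
        · obtain ⟨j, hj, hjeq⟩ := List.mem_iff_getElem.mp (hwlst i hi)
          refine ⟨j, fun _ => ⟨by rw [hlen] at hj; exact hj, ?_⟩⟩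
          rw [List.getD_eq_getElem lst 0 hj, hjeq]
        · exact ⟨0, fun h => absurd h hi⟩
      choose kk hkkspec using hkk
      have hkval : ∀ i, i ≤ N → lst.getD (kk i) 0 = w i := fun i hi => (hkkspec i hi).2
      have hklt : ∀ i, i ≤ N → kk i < n := fun i hi => (hkkspec i hi).1
      have hwlt : ∀ i, i < N → w i < w (i+1) := by
        intro i hi
        have h1 := (hwmem i (by omega)).2
        have h2 := (hwmem (i+1) (by omega)).1
        have h3 := hsep i hi
        linarith
      have hkstrict : ∀ i, i < N → kk i < kk (i+1) := by
        intro i hi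
        by_contra hle
        push_neg at hle
        have h := sorted_getD_mono hsort hle (by rw [hlen]; exact hklt i (by omega))
        rw [hkval i (by omega), hkval (i+1) (by omega)] at h
        exact absurd h (not_le.mpr (hwlt i hi))
      set f : ℕ → ℝ := fun j => h0 (lst.getD j 0) with hfdef
      have horder : ∀ t : ℕ, orderStat X n t ω = lst.getD (t - 1) 0 := fun t => rfl
      have hsum : (∑ t ∈ Finset.Icc 2 n,
          |h0 (orderStat X n t ω) - h0 (orderStat X n (t-1) ω)|)
          = ∑ j ∈ Finset.range (n-1), |f (j+1) - f j| := by
        rw [← sum_Icc_two f n]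
        apply Finset.sum_congr rfl
        intro t _
        simp only [hfdef]
        rw [horder t, horder (t-1)]
        have e : t - 1 - 1 = t - 2 := by omega
        rw [e]
      have hgroup : ∑ i ∈ Finset.range N, |f (kk (i+1)) - f (kk i)| ≤
          ∑ j ∈ Finset.range (n-1), |f (j+1) - f j| :=
        grouping_le' f kk N (n-1) hkstrict (by have := hklt N (le_refl N); omega)
      have hwab : ∀ i, i ≤ N → w i ∈ Set.Icc a b := fun i hi =>
        ⟨(hcc_a i hi).trans (hwmem i hi).1, (hwmem i hi).2.trans (hdd_b i hi)⟩
      have hterm : ∀ i, i < N →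
          (∫ x in (w i)..(w (i+1)), |h0star x|) - 2*ε₁*(w (i+1) - w i)
            ≤ |f (kk (i+1)) - f (kk i)| := by
        intro i hi
        have hle : w i ≤ w (i+1) := (hwlt i hi).le
        have hI : |f (kk (i+1)) - f (kk i)| = |∫ x in (w i)..(w (i+1)), h0star x| := by
          simp only [hfdef]
          rw [hkval i (by omega), hkval (i+1) (by omega)]
          rw [hAC' (w i) (w (i+1)) hle
            (le_trans ha (EReal.coe_le_coe_iff.mpr (hwab i (by omega)).1))
            (le_trans (EReal.coe_le_coe_iff.mpr (hwab (i+1) (by omega)).2) hb)]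
        rw [hI]
        have hosc : ∀ x ∈ Set.Icc (w i) (w (i+1)), ∀ y ∈ Set.Icc (w i) (w (i+1)),
            |h0star x - h0star y| < ε₁ := by
          intro x hx y hy
          have hxab : x ∈ Set.Icc a b :=
            ⟨le_trans (hwab i (by omega)).1 hx.1, le_trans hx.2 (hwab (i+1) (by omega)).2⟩
          have hyab : y ∈ Set.Icc a b :=
            ⟨le_trans (hwab i (by omega)).1 hy.1, le_trans hy.2 (hwab (i+1) (by omega)).2⟩
          apply hδ x hxab y hyab
          have hwd : w (i+1) - w i ≤ 2*ℓ := by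
            have h1 := (hwmem (i+1) (by omega)).2
            have h2 := (hwmem i (by omega)).1
            have h3 := hgap i hi
            linarith
          have habs : |x - y| ≤ w (i+1) - w i := by
            rw [abs_le]
            constructor <;> [linarith [hx.1, hx.2, hy.1, hy.2]; linarith [hx.1, hx.2, hy.1, hy.2]]
          linarith
        have hoi := osc_integral h0star hgInt hle ε₁ hosc
        linarith
      have hsumterms : (∑ i ∈ Finset.range N, ∫ x in (w i)..(w (i+1)), |h0star x|)
          - 2*ε₁*(w N - w 0) ≤ ∑ i ∈ Finset.range N, |f (kk (i+1)) - f (kk i)| := by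
        have h1 : ∑ i ∈ Finset.range N,
            ((∫ x in (w i)..(w (i+1)), |h0star x|) - 2*ε₁*(w (i+1) - w i))
            ≤ ∑ i ∈ Finset.range N, |f (kk (i+1)) - f (kk i)| :=
          Finset.sum_le_sum (fun i hi => hterm i (Finset.mem_range.mp hi))
        rw [Finset.sum_sub_distrib] at h1
        have h2 : ∑ i ∈ Finset.range N, 2*ε₁*(w (i+1) - w i) = 2*ε₁*(w N - w 0) := by
          rw [← Finset.mul_sum, Finset.sum_range_sub w]
        rw [h2] at h1
        exact h1
      have hadj : ∑ i ∈ Finset.range N, ∫ x in (w i)..(w (i+1)), |h0star x|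
          = ∫ x in (w 0)..(w N), |h0star x| :=
        intervalIntegral.sum_integral_adjacent_intervals
          (fun k _ => hgInt.abs.intervalIntegrable)
      have hw0ab := hwab 0 (by omega)
      have hwNab := hwab N (le_refl N)
      have hV3 : V = (∫ x in a..(w 0), |h0star x|) + ((∫ x in (w 0)..(w N), |h0star x|)
          + ∫ x in (w N)..b, |h0star x|) := by
        rw [hVdef, integral_Icc_eq_integral_Ioc, ← intervalIntegral.integral_of_le hab]
        rw [intervalIntegral.integral_add_adjacent_intervals
            hgInt.abs.intervalIntegrable hgInt.abs.intervalIntegrable,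
          intervalIntegral.integral_add_adjacent_intervals
            hgInt.abs.intervalIntegrable hgInt.abs.intervalIntegrable]
      have hw0d : w 0 ≤ a + ℓ/4 := by
        have h := (hwmem 0 (by omega)).2
        rw [hddval, hccval 0 (by omega)] at h
        push_cast at h
        linarith
      have hwNc : b - ℓ/4 ≤ w N := by
        have h := (hwmem N (le_refl N)).1
        rwa [hccN] at h
      have hedge1 : (∫ x in a..(w 0), |h0star x|) ≤ M * (ℓ/4) := by
        calc (∫ x in a..(w 0), |h0star x|) ≤ ∫ _x in a..(w 0), M :=
            intervalIntegral.integral_mono_on hw0ab.1 hgInt.abs.intervalIntegrable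
              intervalIntegrable_const
              (fun x hx => hMb x ⟨hx.1, le_trans hx.2 hw0ab.2⟩)
          _ = (w 0 - a) * M := by rw [intervalIntegral.integral_const, smul_eq_mul]
          _ ≤ (ℓ/4) * M := mul_le_mul_of_nonneg_right (by linarith) hM0
          _ = M * (ℓ/4) := mul_comm _ _
      have hedge2 : (∫ x in (w N)..b, |h0star x|) ≤ M * (ℓ/4) := by
        calc (∫ x in (w N)..b, |h0star x|) ≤ ∫ _x in (w N)..b, M :=
            intervalIntegral.integral_mono_on hwNab.2 hgInt.abs.intervalIntegrable
              intervalIntegrable_const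
              (fun x hx => hMb x ⟨le_trans hwNab.1 hx.1, hx.2⟩)
          _ = (b - w N) * M := by rw [intervalIntegral.integral_const, smul_eq_mul]
          _ ≤ (ℓ/4) * M := mul_le_mul_of_nonneg_right (by linarith) hM0
          _ = M * (ℓ/4) := mul_comm _ _
      have hS_le_V := hUB n ω hS
      have hε₁ba : 2*ε₁*(b - a) = ε/2 := by
        rw [hε₁def]; field_simp; ring
      have hMℓ : 2 * (M * (ℓ/4)) ≤ ε/8 := by
        have h1 : ℓ ≤ ε/(8*M+8) := hℓr.trans hrε
        have h2 : M * ℓ ≤ M * (ε/(8*M+8)) := mul_le_mul_of_nonneg_left h1 hM0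
        have h3 : M * (ε/(8*M+8)) ≤ ε/8 := by
          rw [mul_div_assoc', div_le_div_iff₀ (by linarith : (0:ℝ) < 8*M+8) (by norm_num : (0:ℝ) < 8)]
          nlinarith
        nlinarith
      have hwba : w N - w 0 ≤ b - a := by
        have := hwNab.2
        have := hw0ab.1
        linarith
      have hw0N : 0 ≤ w N - w 0 := by
        have : ℓ/2 ≤ b - a := by linarith
        linarith
      have hlow : V - (ε/2 + ε/8) ≤ ∑ t ∈ Finset.Icc 2 n,
          |h0 (orderStat X n t ω) - h0 (orderStat X n (t-1) ω)| := by
        rw [hsum]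
        refine le_trans ?_ hgroup
        refine le_trans ?_ hsumterms
        rw [hadj]
        have h2 : 2*ε₁*(w N - w 0) ≤ 2*ε₁*(b-a) :=
          mul_le_mul_of_nonneg_left hwba (by linarith)
        rw [hV3]
        linarith
      have habs2 : |(∑ t ∈ Finset.Icc 2 n,
          |h0 (orderStat X n t ω) - h0 (orderStat X n (t-1) ω)|) - V| ≤ ε/2 + ε/8 := by
        rw [abs_le]
        constructor <;> linarith
      linarith
    -- conclusion via squeeze
    have hPbound : ∀ n : ℕ, P {ω | ε ≤ |(∑ t ∈ Finset.Icc 2 n,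
        |h0 (orderStat X n t ω) - h0 (orderStat X n (t-1) ω)|) - V|}
        ≤ P {ω | εF ≤ ⨆ x : ℝ, |empCDF X n ω x - F x|} := by
      intro n
      calc P {ω | ε ≤ |(∑ t ∈ Finset.Icc 2 n,
          |h0 (orderStat X n t ω) - h0 (orderStat X n (t-1) ω)|) - V|}
          ≤ P (Sbad ∪ {ω | εF ≤ ⨆ x : ℝ, |empCDF X n ω x - F x|}) :=
            measure_mono (hincl n)
        _ ≤ P Sbad + P {ω | εF ≤ ⨆ x : ℝ, |empCDF X n ω x - F x|} := measure_union_le _ _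
        _ = P {ω | εF ≤ ⨆ x : ℝ, |empCDF X n ω x - F x|} := by rw [hSbad, zero_add]
    exact tendsto_of_tendsto_of_tendsto_of_le_of_le tendsto_const_nhds hGC
      (fun n => zero_le) hPbound
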